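/- Let f be a twice differentiable, strictly positive function on [a,b] with f'(a) > 0 and f'' ≥ 0, and let g be a nonnegative, continuous, increasing function on [a,b]. Then ∫_a^b g/f ≤ (1/(e·f(a)·f'(a)))·liminf_{n→∞} (∫_a^b fⁿ·g^{n+1})^{1/(n+1)} ≤ (1/(e·f(a)·f'(a)))·limsup_{n→∞} (∫_a^b fⁿ·g^{n+1})^{1/(n+1)} ≤ f(b)·g(b)/(e·f(a)·f'(a)). -/

import Mathlib

open Filter Topology

lemma log_le_div_e {t : ℝ} (ht : 0 < t) : Real.log t ≤ t / Real.exp 1 := by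
  have h := Real.log_le_sub_one_of_pos (div_pos ht (Real.exp_pos 1))
  rw [Real.log_div ht.ne' (Real.exp_pos 1).ne', Real.log_exp] at h
  linarith

lemma aux_tendsto (C M : ℝ) (hC : 0 < C) (hM : 0 < M) :
    Tendsto (fun n : ℕ => (C * M ^ n) ^ (1 / ((n : ℝ) + 1))) atTop (𝓝 M) := by
  have heq : ∀ n : ℕ, (C * M ^ n) ^ (1 / ((n : ℝ) + 1)) =
      Real.exp (Real.log C * (1 / ((n : ℝ) + 1)) + Real.log M * ((n : ℝ) / ((n : ℝ) + 1))) := by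
    intro n
    have hpos : 0 < C * M ^ n := mul_pos hC (pow_pos hM n)
    rw [Real.rpow_def_of_pos hpos, Real.log_mul hC.ne' (pow_pos hM n).ne', Real.log_pow]
    ring_nf
  simp only [heq]
  have h1 : Tendsto (fun n : ℕ => 1 / ((n : ℝ) + 1)) atTop (𝓝 0) :=
    tendsto_one_div_add_atTop_nhds_zero_nat
  have h2 : Tendsto (fun n : ℕ => (n : ℝ) / ((n : ℝ) + 1)) atTop (𝓝 1) := by
    have : ∀ n : ℕ, (n : ℝ) / ((n : ℝ) + 1) = 1 - 1 / ((n : ℝ) + 1) := by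
      intro n
      field_simp
      ring
    simp only [this]
    simpa using tendsto_const_nhds.sub h1
  have h3 : Tendsto (fun n : ℕ => Real.log C * (1 / ((n : ℝ) + 1)) + Real.log M * ((n : ℝ) / ((n : ℝ) + 1))) atTop (𝓝 (Real.log M)) := by
    simpa using (tendsto_const_nhds.mul h1).add (tendsto_const_nhds.mul h2)
  simpa [Real.exp_log hM, Function.comp_def] using (Real.continuous_exp.tendsto _).comp h3

theorem stmt8 (a b : ℝ) (hab : a < b)
    (f : ℝ → ℝ)
    (hf_diff : DifferentiableOn ℝ f (Set.Icc a b))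
    (hf_diff2 : DifferentiableOn ℝ (derivWithin f (Set.Icc a b)) (Set.Icc a b))
    (hf_pos : ∀ x ∈ Set.Icc a b, 0 < f x)
    (hf'a : 0 < derivWithin f (Set.Icc a b) a)
    (hf''_nonneg : ∀ x ∈ Set.Icc a b,
      0 ≤ derivWithin (derivWithin f (Set.Icc a b)) (Set.Icc a b) x)
    (g : ℝ → ℝ) (hg_nonneg : ∀ x ∈ Set.Icc a b, 0 ≤ g x)
    (hg_cont : ContinuousOn g (Set.Icc a b))
    (hg_mono : MonotoneOn g (Set.Icc a b)) :
    (∫ x in a..b, g x / f x) ≤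
        (1 / (Real.exp 1 * f a * derivWithin f (Set.Icc a b) a)) *
          atTop.liminf (fun n : ℕ =>
            (∫ x in a..b, f x ^ n * g x ^ (n + 1)) ^ (1 / ((n : ℝ) + 1))) ∧
      (1 / (Real.exp 1 * f a * derivWithin f (Set.Icc a b) a)) *
          atTop.liminf (fun n : ℕ =>
            (∫ x in a..b, f x ^ n * g x ^ (n + 1)) ^ (1 / ((n : ℝ) + 1))) ≤
        (1 / (Real.exp 1 * f a * derivWithin f (Set.Icc a b) a)) *
          atTop.limsup (fun n : ℕ =>
            (∫ x in a..b, f x ^ n * g x ^ (n + 1)) ^ (1 / ((n : ℝ) + 1))) ∧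
      (1 / (Real.exp 1 * f a * derivWithin f (Set.Icc a b) a)) *
          atTop.limsup (fun n : ℕ =>
            (∫ x in a..b, f x ^ n * g x ^ (n + 1)) ^ (1 / ((n : ℝ) + 1))) ≤
        f b * g b / (Real.exp 1 * f a * derivWithin f (Set.Icc a b) a) := by
  have hab' : a ≤ b := hab.le
  have haI : a ∈ Set.Icc a b := Set.left_mem_Icc.mpr hab'
  have hbI : b ∈ Set.Icc a b := Set.right_mem_Icc.mpr hab'
  set f' : ℝ → ℝ := derivWithin f (Set.Icc a b) with hf'def
  set m : ℝ := f' a with hmdef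
  have hm : 0 < m := hf'a
  have hc : 0 < f a := hf_pos a haI
  have hE : (0:ℝ) < Real.exp 1 := Real.exp_pos 1
  set K : ℝ := 1 / (Real.exp 1 * f a * m) with hKdef
  have hK : 0 ≤ K := by positivity
  -- f' is monotone
  have hf'mono : MonotoneOn f' (Set.Icc a b) := by
    apply monotoneOn_of_hasDerivWithinAt_nonneg (f' := derivWithin f' (Set.Icc a b))
      (convex_Icc a b) hf_diff2.continuousOn
    · intro x hx
      rw [interior_Icc] at hx ⊢
      exact ((hf_diff2 x (Set.Ioo_subset_Icc_self hx)).hasDerivWithinAt).mono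
        Set.Ioo_subset_Icc_self
    · intro x hx
      rw [interior_Icc] at hx
      exact hf''_nonneg x (Set.Ioo_subset_Icc_self hx)
  have hf'pos : ∀ x ∈ Set.Icc a b, 0 < f' x := fun x hx =>
    lt_of_lt_of_le hm (hf'mono haI hx hx.1)
  -- f is monotone
  have hfmono : MonotoneOn f (Set.Icc a b) := by
    apply monotoneOn_of_hasDerivWithinAt_nonneg (f' := f') (convex_Icc a b)
      hf_diff.continuousOn
    · intro x hx
      rw [interior_Icc] at hx ⊢
      exact ((hf_diff x (Set.Ioo_subset_Icc_self hx)).hasDerivWithinAt).mono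
        Set.Ioo_subset_Icc_self
    · intro x hx
      rw [interior_Icc] at hx
      exact (hf'pos x (Set.Ioo_subset_Icc_self hx)).le
  -- f lies above its tangent line at a
  have hFmono : MonotoneOn (fun x => f x - m * x) (Set.Icc a b) := by
    apply monotoneOn_of_hasDerivWithinAt_nonneg (f' := fun x => f' x - m) (convex_Icc a b)
      (hf_diff.continuousOn.sub ((continuous_const.mul continuous_id).continuousOn))
    · intro x hx
      rw [interior_Icc] at hx ⊢
      have h1 : HasDerivWithinAt f (f' x) (Set.Ioo a b) x :=
        ((hf_diff x (Set.Ioo_subset_Icc_self hx)).hasDerivWithinAt).mono Set.Ioo_subset_Icc_self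
      have h2 : HasDerivWithinAt (fun x : ℝ => m * x) m (Set.Ioo a b) x := by
        simpa using ((hasDerivAt_id x).const_mul m).hasDerivWithinAt (s := Set.Ioo a b)
      exact h1.sub h2
    · intro x hx
      rw [interior_Icc] at hx
      have := hf'mono haI (Set.Ioo_subset_Icc_self hx) hx.1.le
      linarith
  have hlin : ∀ x ∈ Set.Icc a b, f a + m * (x - a) ≤ f x := by
    intro x hx
    have := hFmono haI hx hx.1
    simp only at this
    linarith
  have hφpos : ∀ x ∈ Set.Icc a b, 0 < f a + m * (x - a) := by
    intro x hx
    have := mul_nonneg hm.le (sub_nonneg.mpr hx.1)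
    linarith
  have hfc : ContinuousOn f (Set.Icc a b) := hf_diff.continuousOn
  -- Step B : the integral inequality
  have hB : (∫ x in a..b, g x / f x) ≤ K * (f b * g b) := by
    have hgb : 0 ≤ g b := hg_nonneg b hbI
    have hmono : (∫ x in a..b, g x / f x) ≤
        ∫ x in a..b, g b * (f a + m * (x - a))⁻¹ := by
      apply intervalIntegral.integral_mono_on hab'
      · apply ContinuousOn.intervalIntegrable
        rw [Set.uIcc_of_le hab']
        exact hg_cont.div hfc (fun x hx => (hf_pos x hx).ne')
      · apply ContinuousOn.intervalIntegrable
        rw [Set.uIcc_of_le hab']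
        exact continuousOn_const.mul ((continuousOn_const.add
          (continuousOn_const.mul (continuousOn_id.sub continuousOn_const))).inv₀
          (fun x hx => (hφpos x hx).ne'))
      · intro x hx
        rw [← div_eq_mul_inv]
        exact div_le_div₀ hgb (hg_mono hx hbI hx.2) (hφpos x hx) (hlin x hx)
    have hcalc : (∫ x in a..b, (f a + m * (x - a))⁻¹) =
        (1/m) * Real.log (f a + m * (b - a)) - (1/m) * Real.log (f a) := by
      have hderiv : ∀ x ∈ Set.uIcc a b,
          HasDerivAt (fun y => (1/m) * Real.log (f a + m * (y - a))) ((f a + m * (x - a))⁻¹) x := by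
        intro x hx
        rw [Set.uIcc_of_le hab'] at hx
        have hφ : 0 < f a + m * (x - a) := hφpos x hx
        have h1 : HasDerivAt (fun y : ℝ => f a + m * (y - a)) m x := by
          simpa using (((hasDerivAt_id x).sub_const a).const_mul m).const_add (f a)
        have h2 := (Real.hasDerivAt_log hφ.ne').comp x h1
        have h3 := h2.const_mul (1/m)
        refine h3.congr_deriv ?_
        rw [one_div, mul_comm (f a + m * (x - a))⁻¹ m, ← mul_assoc, inv_mul_cancel₀ hm.ne', one_mul]
      have hint : IntervalIntegrable (fun x => (f a + m * (x - a))⁻¹) MeasureTheory.volume a b := by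
        apply ContinuousOn.intervalIntegrable
        rw [Set.uIcc_of_le hab']
        exact (continuousOn_const.add
          (continuousOn_const.mul (continuousOn_id.sub continuousOn_const))).inv₀
          (fun x hx => (hφpos x hx).ne')
      rw [intervalIntegral.integral_eq_sub_of_hasDerivAt hderiv hint]
      simp
    have hφb : 0 < f a + m * (b - a) := hφpos b hbI
    have hlog : Real.log (f a + m * (b - a)) - Real.log (f a) ≤ f b / (f a * Real.exp 1) := by
      rw [← Real.log_div hφb.ne' hc.ne']
      calc Real.log ((f a + m * (b - a)) / f a)
          ≤ ((f a + m * (b - a)) / f a) / Real.exp 1 := log_le_div_e (div_pos hφb hc)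
        _ ≤ (f b / f a) / Real.exp 1 := by
            gcongr
            exact hlin b hbI
        _ = f b / (f a * Real.exp 1) := by
            rw [div_div]
    calc (∫ x in a..b, g x / f x)
        ≤ ∫ x in a..b, g b * (f a + m * (x - a))⁻¹ := hmono
      _ = g b * ((1/m) * Real.log (f a + m * (b - a)) - (1/m) * Real.log (f a)) := by
          rw [intervalIntegral.integral_const_mul, hcalc]
      _ = g b * ((1/m) * (Real.log (f a + m * (b - a)) - Real.log (f a))) := by ring
      _ ≤ g b * ((1/m) * (f b / (f a * Real.exp 1))) := by
          gcongr
      _ = K * (f b * g b) := by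
          rw [hKdef]
          field_simp
  -- nonnegativity / integrability of the sequence integrands
  have hInt : ∀ (u v : ℝ), u ∈ Set.Icc a b → v ∈ Set.Icc a b → ∀ n : ℕ,
      IntervalIntegrable (fun x => f x ^ n * g x ^ (n + 1)) MeasureTheory.volume u v := by
    intro u v hu hv n
    apply ContinuousOn.intervalIntegrable
    apply ContinuousOn.mono ((hfc.pow n).mul (hg_cont.pow (n+1)))
    rw [← Set.uIcc_of_le hab']
    exact Set.uIcc_subset_uIcc (by rw [Set.uIcc_of_le hab']; exact hu)
      (by rw [Set.uIcc_of_le hab']; exact hv)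
  have hnn : ∀ n : ℕ, ∀ x ∈ Set.Icc a b, 0 ≤ f x ^ n * g x ^ (n + 1) := by
    intro n x hx
    have h1 := (hf_pos x hx).le
    have h2 := hg_nonneg x hx
    positivity
  have hintnonneg : ∀ n : ℕ, 0 ≤ ∫ x in a..b, f x ^ n * g x ^ (n + 1) := fun n =>
    intervalIntegral.integral_nonneg hab' (fun x hx => hnn n x hx)
  set T : ℕ → ℝ := fun n : ℕ =>
    (∫ x in a..b, f x ^ n * g x ^ (n + 1)) ^ (1 / ((n : ℝ) + 1)) with hTdef
  have hTnonneg : ∀ n : ℕ, 0 ≤ T n := fun n => Real.rpow_nonneg (hintnonneg n) _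
  rcases eq_or_lt_of_le (hg_nonneg b hbI) with h0 | hgbpos
  · -- degenerate case : g b = 0, hence g ≡ 0 on [a,b]
    have hg0 : ∀ x ∈ Set.Icc a b, g x = 0 := fun x hx =>
      le_antisymm ((hg_mono hx hbI hx.2).trans h0.ge) (hg_nonneg x hx)
    have hseq : T = fun _ => (0:ℝ) := by
      funext n
      have hi : (∫ x in a..b, f x ^ n * g x ^ (n + 1)) = 0 := by
        rw [intervalIntegral.integral_congr (g := fun _ => (0:ℝ))]
        · simp
        · intro x hx
          rw [Set.uIcc_of_le hab'] at hx
          simp [hg0 x hx]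
      rw [hTdef]
      simp only [hi]
      rw [Real.zero_rpow]
      positivity
    have hifg : (∫ x in a..b, g x / f x) = 0 := by
      rw [intervalIntegral.integral_congr (g := fun _ => (0:ℝ))]
      · simp
      · intro x hx
        rw [Set.uIcc_of_le hab'] at hx
        simp [hg0 x hx]
    rw [hseq, hifg, liminf_const, limsup_const, ← h0]
    norm_num
  · -- main case : g b > 0
    have hMpos : 0 < f b * g b := mul_pos (hf_pos b hbI) hgbpos
    have hba : (0:ℝ) < b - a := sub_pos.mpr hab
    -- upper bound on the terms
    have hTle : ∀ n : ℕ, T n ≤ (((b - a) * g b) * (f b * g b) ^ n) ^ (1 / ((n : ℝ) + 1)) := by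
      intro n
      apply Real.rpow_le_rpow (hintnonneg n) _ (by positivity)
      calc (∫ x in a..b, f x ^ n * g x ^ (n + 1))
          ≤ ∫ _x in a..b, f b ^ n * g b ^ (n + 1) := by
            apply intervalIntegral.integral_mono_on hab' (hInt a b haI hbI n)
              intervalIntegrable_const
            intro x hx
            have h1 : 0 ≤ f x := (hf_pos x hx).le
            have h2 : 0 ≤ g x := hg_nonneg x hx
            have h3 : 0 ≤ f b := (hf_pos b hbI).le
            have h4 : 0 ≤ g b := hg_nonneg b hbI
            gcongr <;>
              first
                | positivity
                | exact hfmono hx hbI hx.2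
                | exact hg_mono hx hbI hx.2
        _ = ((b - a) * g b) * (f b * g b) ^ n := by
            rw [intervalIntegral.integral_const, smul_eq_mul]
            ring
    have hu := aux_tendsto ((b - a) * g b) (f b * g b) (mul_pos hba hgbpos) hMpos
    have hbddT : IsBoundedUnder (· ≤ ·) atTop T :=
      hu.isBoundedUnder_le.mono_le (Eventually.of_forall hTle)
    have hbddT' : IsBoundedUnder (· ≥ ·) atTop T :=
      isBoundedUnder_of ⟨0, fun n => hTnonneg n⟩
    have hlimsup_le : atTop.limsup T ≤ f b * g b := by
      calc atTop.limsup T ≤ atTop.limsup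
            (fun n : ℕ => (((b - a) * g b) * (f b * g b) ^ n) ^ (1 / ((n : ℝ) + 1))) :=
          limsup_le_limsup (Eventually.of_forall hTle) hbddT'.isCoboundedUnder_le
            hu.isBoundedUnder_le
        _ = f b * g b := hu.limsup_eq
    -- lower bound on the liminf
    have hstep : ∀ ε : ℝ, 0 < ε → ε < f b * g b → f b * g b - ε ≤ atTop.liminf T := by
      intro ε hε hεM
      obtain ⟨δ1, hδ1, hδ1p⟩ := Metric.continuousWithinAt_iff.mp ((hfc.mul hg_cont) b hbI) ε hε
      obtain ⟨δ2, hδ2, hδ2p⟩ := Metric.continuousWithinAt_iff.mp (hg_cont b hbI) (g b / 2)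
        (by positivity)
      set δ := min δ1 δ2 with hδdef
      have hδpos : 0 < δ := lt_min hδ1 hδ2
      set a' := max a (b - δ / 2) with ha'def
      have ha' : a ≤ a' := le_max_left _ _
      have ha'b : a' < b := max_lt hab (by linarith)
      have ha'I : a' ∈ Set.Icc a b := ⟨ha', ha'b.le⟩
      have hnear : ∀ x ∈ Set.Icc a' b, f b * g b - ε ≤ f x * g x ∧ g b / 2 ≤ g x := by
        intro x hx
        have hxI : x ∈ Set.Icc a b := ⟨ha'.trans hx.1, hx.2⟩
        have hba' : b - δ / 2 ≤ a' := le_max_right _ _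
        have hd : dist x b < δ := by
          rw [Real.dist_eq, abs_of_nonpos (by linarith [hx.2])]
          have := hx.1
          linarith
        constructor
        · have h1 := hδ1p hxI (hd.trans_le (min_le_left _ _))
          simp only [Real.dist_eq, Pi.mul_apply] at h1
          have h2 := abs_lt.mp h1
          linarith [h2.1]
        · have h1 := hδ2p hxI (hd.trans_le (min_le_right _ _))
          simp only [Real.dist_eq] at h1
          have h2 := abs_lt.mp h1
          linarith [h2.1]
      have hC2 : 0 < (b - a') * (g b / 2) := mul_pos (sub_pos.mpr ha'b) (by positivity)
      have hl := aux_tendsto ((b - a') * (g b / 2)) (f b * g b - ε) hC2 (by linarith)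
      have hTge : ∀ n : ℕ,
          (((b - a') * (g b / 2)) * (f b * g b - ε) ^ n) ^ (1 / ((n : ℝ) + 1)) ≤ T n := by
        intro n
        have hMε : (0:ℝ) ≤ f b * g b - ε := by linarith
        apply Real.rpow_le_rpow (by positivity) _ (by positivity)
        have hsplit : (∫ x in a..b, f x ^ n * g x ^ (n + 1)) =
            (∫ x in a..a', f x ^ n * g x ^ (n + 1)) +
              ∫ x in a'..b, f x ^ n * g x ^ (n + 1) :=
          (intervalIntegral.integral_add_adjacent_intervals (hInt a a' haI ha'I n)
            (hInt a' b ha'I hbI n)).symm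
        have h1 : 0 ≤ ∫ x in a..a', f x ^ n * g x ^ (n + 1) :=
          intervalIntegral.integral_nonneg ha'
            (fun x hx => hnn n x ⟨hx.1, hx.2.trans ha'b.le⟩)
        have h2 : ((b - a') * (g b / 2)) * (f b * g b - ε) ^ n ≤
            ∫ x in a'..b, f x ^ n * g x ^ (n + 1) := by
          calc ((b - a') * (g b / 2)) * (f b * g b - ε) ^ n
              = ∫ _x in a'..b, (f b * g b - ε) ^ n * (g b / 2) := by
                rw [intervalIntegral.integral_const, smul_eq_mul]
                ring
            _ ≤ ∫ x in a'..b, f x ^ n * g x ^ (n + 1) := by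
                apply intervalIntegral.integral_mono_on ha'b.le intervalIntegrable_const
                  (hInt a' b ha'I hbI n)
                intro x hx
                have hxI : x ∈ Set.Icc a b := ⟨ha'.trans hx.1, hx.2⟩
                obtain ⟨hh, hg2⟩ := hnear x hx
                have hgx : 0 ≤ g x := hg_nonneg x hxI
                calc (f b * g b - ε) ^ n * (g b / 2)
                    ≤ (f x * g x) ^ n * g x :=
                      mul_le_mul (pow_le_pow_left₀ hMε hh n) hg2 (by linarith)
                        (pow_nonneg (mul_nonneg (hf_pos x hxI).le hgx) n)
                  _ = f x ^ n * g x ^ (n + 1) := by ring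
        linarith
      calc f b * g b - ε
          = atTop.liminf (fun n : ℕ =>
              (((b - a') * (g b / 2)) * (f b * g b - ε) ^ n) ^ (1 / ((n : ℝ) + 1))) :=
            hl.liminf_eq.symm
        _ ≤ atTop.liminf T :=
            liminf_le_liminf (Eventually.of_forall hTge) hl.isBoundedUnder_ge
              hbddT.isCoboundedUnder_ge
    have hliminf_ge : f b * g b ≤ atTop.liminf T := by
      by_contra hcon
      push_neg at hcon
      have hL0 : 0 ≤ atTop.liminf T :=
        le_liminf_of_le hbddT.isCoboundedUnder_ge (Eventually.of_forall hTnonneg)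
      have hε : 0 < (f b * g b - atTop.liminf T) / 2 := by linarith
      have := hstep _ hε (by linarith)
      linarith
    refine ⟨?_, ?_, ?_⟩
    · calc (∫ x in a..b, g x / f x)
          ≤ K * (f b * g b) := hB
        _ ≤ K * atTop.liminf T := mul_le_mul_of_nonneg_left hliminf_ge hK
    · exact mul_le_mul_of_nonneg_left (liminf_le_limsup hbddT hbddT') hK
    · have hrw : f b * g b / (Real.exp 1 * f a * m) = K * (f b * g b) := by
        rw [hKdef]
        ring
      rw [hrw]
      exact mul_le_mul_of_nonneg_left hlimsup_le hK
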